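/- Let a>2 and b<0 be real numbers and define J(z,t) = z/2 + ( b²/(16z) + (a−2)²/(16t) )·(1+√(1+4tz)) + ab/4 for z>0, t>0. Set ε = b²/(4(4−ab)), A = (4−ab)/2, ξ = (a−2)²/(4(4−ab)) and B = 4(4−ab)⁵/b⁶, and let K = [ε,A] × [ξ,B]. Then for every (z,t) with z>0, t>0 and (z,t) ∉ K, one has J(z,t) ≥ 1. -/

import Mathlib

set_option maxHeartbeats 1000000 in
/-- Coercivity of the rate function `J`: for `a > 2` and `b < 0`, with
`J(z,t) = z/2 + (b²/(16z) + (a-2)²/(16t))(1+√(1+4tz)) + ab/4`, setting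
`ε = b²/(4(4-ab))`, `A = (4-ab)/2`, `ξ = (a-2)²/(4(4-ab))`, `B = 4(4-ab)⁵/b⁶` and
`K = [ε,A] × [ξ,B]`, every `(z,t)` with `z > 0`, `t > 0` outside `K` satisfies
`J(z,t) ≥ 1`. -/
theorem J_coercive (a b : ℝ) (ha : 2 < a) (hb : b < 0)
    (J : ℝ → ℝ → ℝ)
    (hJ : ∀ z t : ℝ, 0 < z → 0 < t →
      J z t = z/2 + (b^2/(16*z) + (a-2)^2/(16*t)) * (1 + Real.sqrt (1 + 4*t*z))
        + a*b/4) :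
    ∀ z t : ℝ, 0 < z → 0 < t →
      (z, t) ∉ (Set.Icc (b^2/(4*(4-a*b))) ((4-a*b)/2)) ×ˢ
        (Set.Icc ((a-2)^2/(4*(4-a*b))) (4*(4-a*b)^5/b^6)) →
      1 ≤ J z t := by
  intro z t hz ht hK
  have hbne : b ≠ 0 := ne_of_lt hb
  have hb2 : 0 < b ^ 2 := by positivity
  obtain ⟨c, hcdef⟩ : ∃ c : ℝ, c = 4 - a * b := ⟨4 - a * b, rfl⟩
  rw [← hcdef] at hK
  have hc : 4 < c := by
    rw [hcdef]
    have : 0 < (a - 2) * (-b) := mul_pos (by linarith) (by linarith)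
    nlinarith
  have hc0 : 0 < c := by linarith
  have hab : a * b = 4 - c := by rw [hcdef]; ring
  have hcb : 2 * (-b) < c := by
    rw [hcdef]
    have : 0 < (a - 2) * (-b) := mul_pos (by linarith) (by linarith)
    nlinarith
  have hb2c : 4 * b ^ 2 < c ^ 2 := by
    have h1 : 0 < (c - 2 * (-b)) * (c + 2 * (-b)) :=
      mul_pos (by linarith) (by linarith)
    nlinarith [h1]
  rw [hJ z t hz ht]
  obtain ⟨S, hSdef⟩ : ∃ S : ℝ, S = Real.sqrt (1 + 4 * t * z) := ⟨_, rfl⟩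
  rw [← hSdef]
  have hS0 : 0 ≤ S := hSdef ▸ Real.sqrt_nonneg _
  have hS1 : 1 ≤ S := by
    have h2 : Real.sqrt 1 ≤ Real.sqrt (1 + 4 * t * z) :=
      Real.sqrt_le_sqrt (by nlinarith)
    rw [hSdef]; simpa using h2
  have hR : 0 < b ^ 2 / (16 * z) := by positivity
  have ha2 : 0 < a - 2 := by linarith
  have hQ : 0 < (a - 2) ^ 2 / (16 * t) := by positivity
  have hexp : (b ^ 2 / (16 * z) + (a - 2) ^ 2 / (16 * t)) * (1 + S)
      = b ^ 2 / (16 * z) * (1 + S) + (a - 2) ^ 2 / (16 * t) * (1 + S) := by ring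
  have hcases : z < b ^ 2 / (4 * c) ∨ c / 2 < z ∨ t < (a - 2) ^ 2 / (4 * c)
      ∨ 4 * c ^ 5 / b ^ 6 < t := by
    by_contra hcon
    push_neg at hcon
    obtain ⟨h1, h2, h3, h4⟩ := hcon
    exact hK (Set.mem_prod.mpr ⟨Set.mem_Icc.mpr ⟨h1, h2⟩, Set.mem_Icc.mpr ⟨h3, h4⟩⟩)
  have bigz : c / 2 < z →
      1 ≤ z / 2 + (b ^ 2 / (16 * z) + (a - 2) ^ 2 / (16 * t)) * (1 + S) + a * b / 4 := by
    intro hzc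
    have hP : 0 ≤ (b ^ 2 / (16 * z) + (a - 2) ^ 2 / (16 * t)) * (1 + S) :=
      mul_nonneg (by positivity) (by linarith)
    rw [hab]; linarith
  rcases hcases with h | h | h | h
  · -- z < ε : the term b²/(16z) dominates
    have h' : z * (4 * c) < b ^ 2 := (lt_div_iff₀ (by positivity)).mp h
    have hkey : c / 4 ≤ b ^ 2 / (16 * z) := by
      rw [div_le_div_iff₀ (by norm_num) (by positivity)]
      linarith
    have h2S : (2 : ℝ) ≤ 1 + S := by linarith
    have hmul : c / 4 * 2 ≤ b ^ 2 / (16 * z) * (1 + S) :=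
      mul_le_mul hkey h2S (by norm_num) (le_of_lt hR)
    have hQS : 0 ≤ (a - 2) ^ 2 / (16 * t) * (1 + S) := mul_nonneg (le_of_lt hQ) (by linarith)
    rw [hab, hexp]; linarith
  · exact bigz h
  · -- t < ξ : the term (a-2)²/(16t) dominates
    have h' : t * (4 * c) < (a - 2) ^ 2 := (lt_div_iff₀ (by positivity)).mp h
    have hkey : c / 4 ≤ (a - 2) ^ 2 / (16 * t) := by
      rw [div_le_div_iff₀ (by norm_num) (by positivity)]
      linarith
    have h2S : (2 : ℝ) ≤ 1 + S := by linarith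
    have hmul : c / 4 * 2 ≤ (a - 2) ^ 2 / (16 * t) * (1 + S) :=
      mul_le_mul hkey h2S (by norm_num) (le_of_lt hQ)
    have hRS : 0 ≤ b ^ 2 / (16 * z) * (1 + S) := mul_nonneg (le_of_lt hR) (by linarith)
    rw [hab, hexp]; linarith
  · -- t > B : the square-root term dominates
    by_cases hzA : z ≤ c / 2
    · have hb6 : 0 < b ^ 6 := by positivity
      have hbt : 4 * c ^ 5 ≤ t * b ^ 6 := by
        rw [div_lt_iff₀ hb6] at h; linarith
      have h1 : 4 * c ^ 2 * z ≤ 2 * c ^ 3 := by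
        have := mul_le_mul_of_nonneg_left hzA (by positivity : (0:ℝ) ≤ 4 * c ^ 2)
        nlinarith [this]
      have h2 : 2 * c ^ 3 * b ^ 2 ≤ 4 * c ^ 5 := by
        nlinarith [mul_pos (pow_pos hc0 3) (sub_pos.mpr hb2c)]
      have h3 : 2 * c ^ 3 * b ^ 2 ≤ t * b ^ 6 := h2.trans hbt
      have h4 : 2 * c ^ 3 ≤ b ^ 4 * t :=
        (mul_le_mul_iff_of_pos_right hb2).mp (by nlinarith [h3] : 2 * c ^ 3 * b ^ 2 ≤ b ^ 4 * t * b ^ 2)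
      have hkey : 4 * c ^ 2 * z ≤ b ^ 4 * t := h1.trans h4
      have hsq : (4 * c * z / b ^ 2) ^ 2 ≤ 1 + 4 * t * z := by
        rw [div_pow, div_le_iff₀ (by positivity)]
        nlinarith [mul_le_mul_of_nonneg_left hkey (le_of_lt (by positivity : (0:ℝ) < 4 * z)),
          sq_nonneg (b ^ 2)]
      have hSle : 4 * c * z / b ^ 2 ≤ S := by
        rw [hSdef]; exact Real.le_sqrt_of_sq_le hsq
      have hRS : c / 4 ≤ b ^ 2 / (16 * z) * S := by
        have hh1 : b ^ 2 / (16 * z) * (4 * c * z / b ^ 2) ≤ b ^ 2 / (16 * z) * S :=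
          mul_le_mul_of_nonneg_left hSle (le_of_lt hR)
        have hh2 : b ^ 2 / (16 * z) * (4 * c * z / b ^ 2) = c / 4 := by
          rw [div_mul_div_comm, div_eq_div_iff (by positivity) (by norm_num : (4:ℝ) ≠ 0)]
          ring
        linarith [hh2.symm.le.trans hh1]
      have hQS : 0 ≤ (a - 2) ^ 2 / (16 * t) * (1 + S) := mul_nonneg (le_of_lt hQ) (by linarith)
      have hexp2 : (b ^ 2 / (16 * z) + (a - 2) ^ 2 / (16 * t)) * (1 + S)
          = b ^ 2 / (16 * z) + b ^ 2 / (16 * z) * S + (a - 2) ^ 2 / (16 * t) * (1 + S) := by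
        ring
      rw [hab, hexp2]; linarith
    · exact bigz (lt_of_not_ge hzA)
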